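/- arXiv:1011.0669 — 2 statements merged into one kernel-verified Lean document; each statement's English description precedes it below -/
import Mathlib

section
/- With α = (1-μ)/√(2D) and ν∞ = (α/√π)e^{-α²}, the steady-state cross-covariance function C(τ) = ν∞(H(τ) - ν∞), where H(τ) = J(m_c(τ), σ_c²(τ), D) with m_c(τ) = e^{-τ}(c(1-μ)+μ) + (1-e^{-τ})μ and σ_c²(τ) = e^{-2τ}D(1-c²) + (1-e^{-2τ})D, equals (α² e^{-α²}/π) · ( e^{τ - α²(e^τ - c)/(c + e^τ)} / ( √(1 - c² e^{-2τ}) (c + e^τ) ) - e^{-α²} ) for τ > 0. -/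
set_option maxHeartbeats 2000000 in
/-- Closed form for the steady-state cross-covariance function of the Gaussian
approximation. -/
theorem stmt_6 (μ D c τ : ℝ) (hμ : μ < 1) (hD : 0 < D) (hc0 : 0 ≤ c) (hc1 : c < 1)
    (hτ : 0 < τ) :
    let α := (1 - μ) / Real.sqrt (2 * D)
    let ν := α / Real.sqrt Real.pi * Real.exp (-α ^ 2)
    let mc := Real.exp (-τ) * (c * (1 - μ) + μ) + (1 - Real.exp (-τ)) * μ
    let sc := Real.exp (-2 * τ) * (D * (1 - c ^ 2)) + (1 - Real.exp (-2 * τ)) * D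
    let H := ((1 - mc) * D / (Real.sqrt (2 * Real.pi) * (Real.sqrt sc) ^ 3)) *
        Real.exp (-(1 - mc) ^ 2 / (2 * sc))
    ν * (H - ν)
      = (α ^ 2 * Real.exp (-α ^ 2) / Real.pi) *
          (Real.exp (τ - α ^ 2 * (Real.exp τ - c) / (c + Real.exp τ)) /
              (Real.sqrt (1 - c ^ 2 * Real.exp (-2 * τ)) * (c + Real.exp τ))
            - Real.exp (-α ^ 2)) := by
  dsimp only
  set e := Real.exp (-τ) with he
  set E := Real.exp τ with hE
  have he0 : 0 < e := Real.exp_pos _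
  have hE0 : 0 < E := Real.exp_pos _
  have hEe : E * e = 1 := by rw [he, hE, ← Real.exp_add]; simp
  have he1 : e < 1 := by rw [he]; exact Real.exp_lt_one_iff.mpr (by linarith)
  have he2 : Real.exp (-2 * τ) = e * e := by rw [he, ← Real.exp_add]; ring_nf
  rw [he2]
  set d := Real.sqrt D with hd
  set r2 := Real.sqrt 2 with hr2
  set rp := Real.sqrt Real.pi with hrp
  have hdd : D = d * d := (Real.mul_self_sqrt hD.le).symm
  have hd0 : 0 < d := Real.sqrt_pos.mpr hD
  have hr20 : 0 < r2 := Real.sqrt_pos.mpr (by norm_num)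
  have hrp0 : 0 < rp := Real.sqrt_pos.mpr Real.pi_pos
  have hr22 : r2 * r2 = 2 := Real.mul_self_sqrt (by norm_num)
  have hpi : Real.pi = rp * rp := (Real.mul_self_sqrt Real.pi_pos.le).symm
  have hce : 0 < 1 - c * e := by nlinarith
  have hs2 : 0 < 1 - c ^ 2 * (e * e) := by nlinarith [mul_pos hce (show (0:ℝ) < 1 + c * e by nlinarith [mul_nonneg hc0 he0.le])]
  set s := Real.sqrt (1 - c ^ 2 * (e * e)) with hs
  have hs0 : 0 < s := Real.sqrt_pos.mpr hs2
  have hss : s * s = 1 - c ^ 2 * (e * e) := Real.mul_self_sqrt hs2.le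
  have h2D : Real.sqrt (2 * D) = r2 * d := by rw [hr2, hd, ← Real.sqrt_mul (by norm_num : (0:ℝ) ≤ 2)]
  have h2pi : Real.sqrt (2 * Real.pi) = r2 * rp := by
    rw [hr2, hrp, ← Real.sqrt_mul (by norm_num : (0:ℝ) ≤ 2)]
  have hsc : e * e * (D * (1 - c ^ 2)) + (1 - e * e) * D = (d * s) * (d * s) := by
    have : e * e * (D * (1 - c ^ 2)) + (1 - e * e) * D = D * (1 - c ^ 2 * (e * e)) := by ring
    rw [this, hdd, ← hss]; ring
  have hsqsc : Real.sqrt (e * e * (D * (1 - c ^ 2)) + (1 - e * e) * D) = d * s := by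
    rw [hsc]; exact Real.sqrt_mul_self (by positivity)
  rw [h2D, h2pi, hsqsc]
  set a := (1 - μ) / (r2 * d) with ha
  have haμ : 1 - μ = a * (r2 * d) := by rw [ha]; field_simp
  have hmc : 1 - (e * (c * (1 - μ) + μ) + (1 - e) * μ) = a * (r2 * d) * (1 - c * e) := by
    linear_combination (1 - c * e) * haμ
  rw [hmc]
  have hexp1 : -(a * (r2 * d) * (1 - c * e)) ^ 2 / (2 * (e * e * (D * (1 - c ^ 2)) + (1 - e * e) * D))
      = -a ^ 2 * (1 - c * e) / (1 + c * e) := by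
    rw [hsc]
    have h1ce : (0:ℝ) < 1 + c * e := by nlinarith [mul_nonneg hc0 he0.le]
    rw [div_eq_div_iff (by positivity) h1ce.ne']
    linear_combination (-a^2*d^2*(1-c*e)^2*(1+c*e))*hr22 + (2*a^2*d^2*(1-c*e))*hss
  rw [hexp1]
  have hexp3 : Real.exp (τ - a ^ 2 * (E - c) / (c + E)) = E * Real.exp (-a ^ 2 * (1 - c * e) / (1 + c * e)) := by
    have h1ce : (0:ℝ) < 1 + c * e := by nlinarith [mul_nonneg hc0 he0.le]
    have hcE : (0:ℝ) < c + E := by positivity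
    have : τ - a ^ 2 * (E - c) / (c + E) = τ + -a ^ 2 * (1 - c * e) / (1 + c * e) := by
      have : a ^ 2 * (E - c) / (c + E) = -(-a ^ 2 * (1 - c * e) / (1 + c * e)) := by
        rw [← neg_div, div_eq_div_iff hcE.ne' h1ce.ne']
        linear_combination (2*a^2*c)*hEe
      rw [this]; ring
    rw [this, Real.exp_add, ← hE]
  rw [hexp3]
  set X := Real.exp (-a ^ 2 * (1 - c * e) / (1 + c * e)) with hX
  set Y := Real.exp (-a ^ 2) with hY
  have h1ce : (0:ℝ) < 1 + c * e := by nlinarith [mul_nonneg hc0 he0.le]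
  have hcE : (0:ℝ) < c + E := by positivity
  have key : (1 - c * e) * (c + E) = E * (s * s) := by
    rw [hss]; linear_combination (-c*(1-c*e))*hEe
  rw [hpi, hdd]
  clear_value e E d r2 rp s a X Y
  field_simp
  linear_combination (a^2*Y*X) * key
end

section
/- The first-order Taylor expansion in c of the cross-covariance function C(τ; c) = (α²e^{-α²}/π)( e^{τ - α²(e^τ-c)/(c+e^τ)} / (√(1-c²e^{-2τ})(c+e^τ)) - e^{-α²} ) around c = 0 is C(τ; c) = (c/π) α²(2α² - 1) e^{-2α² - τ} + O(c²); that is, C(τ; 0) = 0 and ∂C/∂c evaluated at c = 0 equals (1/π) α²(2α² - 1) e^{-2α² - τ}. -/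
/-- First order Taylor expansion in c of the cross-covariance function. -/
theorem stmt_7 (α τ : ℝ) (hα : 0 < α) (hτ : 0 < τ) :
    let C : ℝ → ℝ := fun c =>
      (α ^ 2 * Real.exp (-α ^ 2) / Real.pi) *
        (Real.exp (τ - α ^ 2 * (Real.exp τ - c) / (c + Real.exp τ)) /
            (Real.sqrt (1 - c ^ 2 * Real.exp (-2 * τ)) * (c + Real.exp τ))
          - Real.exp (-α ^ 2))
    C 0 = 0 ∧
    deriv C 0 = (1 / Real.pi) * α ^ 2 * (2 * α ^ 2 - 1) * Real.exp (-2 * α ^ 2 - τ) := by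
  intro C
  have hE : (0:ℝ) < Real.exp τ := Real.exp_pos τ
  have hE' : Real.exp τ ≠ 0 := hE.ne'
  have hC0 : C 0 = 0 := by
    show (α ^ 2 * Real.exp (-α ^ 2) / Real.pi) *
        (Real.exp (τ - α ^ 2 * (Real.exp τ - 0) / (0 + Real.exp τ)) /
            (Real.sqrt (1 - 0 ^ 2 * Real.exp (-2 * τ)) * (0 + Real.exp τ))
          - Real.exp (-α ^ 2)) = 0
    have h1 : τ - α ^ 2 * (Real.exp τ - 0) / (0 + Real.exp τ) = τ + (-α ^ 2) := by
      field_simp; ring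
    rw [h1, Real.exp_add]
    norm_num [Real.sqrt_one]
  refine ⟨hC0, ?_⟩
  -- derivative of the inner fraction α² (e^τ - c)/(c + e^τ)
  have hfrac : HasDerivAt (fun c : ℝ => α ^ 2 * (Real.exp τ - c) / (c + Real.exp τ))
      ((α ^ 2 * (-1) * (0 + Real.exp τ) - α ^ 2 * (Real.exp τ - 0) * 1) / (0 + Real.exp τ) ^ 2)
      0 := by
    have hn : HasDerivAt (fun c : ℝ => α ^ 2 * (Real.exp τ - c)) (α ^ 2 * (-1)) 0 := by
      simpa using ((hasDerivAt_id (0:ℝ)).const_sub (Real.exp τ)).const_mul (α ^ 2)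
    have hd : HasDerivAt (fun c : ℝ => c + Real.exp τ) 1 0 :=
      (hasDerivAt_id (0:ℝ)).add_const _
    simpa [Pi.div_def] using hn.div hd (by simpa using hE')
  have hnum : HasDerivAt
      (fun c : ℝ => Real.exp (τ - α ^ 2 * (Real.exp τ - c) / (c + Real.exp τ)))
      (Real.exp (τ - α ^ 2 * (Real.exp τ - 0) / (0 + Real.exp τ)) *
        (-((α ^ 2 * (-1) * (0 + Real.exp τ) - α ^ 2 * (Real.exp τ - 0) * 1) /
          (0 + Real.exp τ) ^ 2))) 0 := by
    have := (hfrac.const_sub τ).exp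
    simpa using this
  -- derivative of the denominator
  have hu : HasDerivAt (fun c : ℝ => 1 - c ^ 2 * Real.exp (-2 * τ))
      (-(2 * 0 ^ 1 * Real.exp (-2 * τ))) 0 := by
    simpa using ((hasDerivAt_pow 2 (0:ℝ)).mul_const (Real.exp (-2 * τ))).const_sub 1
  have hu0 : (1 : ℝ) - 0 ^ 2 * Real.exp (-2 * τ) ≠ 0 := by norm_num
  have hsqrt : HasDerivAt (fun c : ℝ => Real.sqrt (1 - c ^ 2 * Real.exp (-2 * τ)))
      ((-(2 * 0 ^ 1 * Real.exp (-2 * τ))) / (2 * Real.sqrt (1 - 0 ^ 2 * Real.exp (-2 * τ))))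
      0 := hu.sqrt hu0
  have hden : HasDerivAt
      (fun c : ℝ => Real.sqrt (1 - c ^ 2 * Real.exp (-2 * τ)) * (c + Real.exp τ))
      (((-(2 * 0 ^ 1 * Real.exp (-2 * τ))) / (2 * Real.sqrt (1 - 0 ^ 2 * Real.exp (-2 * τ))))
        * (0 + Real.exp τ) + Real.sqrt (1 - 0 ^ 2 * Real.exp (-2 * τ)) * 1) 0 :=
    hsqrt.mul ((hasDerivAt_id (0:ℝ)).add_const _)
  have hden0 : Real.sqrt (1 - 0 ^ 2 * Real.exp (-2 * τ)) * (0 + Real.exp τ) ≠ 0 := by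
    norm_num [Real.sqrt_one]
  have hf := hnum.div hden hden0
  have hC : HasDerivAt C
      ((α ^ 2 * Real.exp (-α ^ 2) / Real.pi) *
        ((Real.exp (τ - α ^ 2 * (Real.exp τ - 0) / (0 + Real.exp τ)) *
            (-((α ^ 2 * (-1) * (0 + Real.exp τ) - α ^ 2 * (Real.exp τ - 0) * 1) /
              (0 + Real.exp τ) ^ 2)) *
          (Real.sqrt (1 - 0 ^ 2 * Real.exp (-2 * τ)) * (0 + Real.exp τ)) -
          Real.exp (τ - α ^ 2 * (Real.exp τ - 0) / (0 + Real.exp τ)) *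
          (((-(2 * 0 ^ 1 * Real.exp (-2 * τ))) /
              (2 * Real.sqrt (1 - 0 ^ 2 * Real.exp (-2 * τ)))) * (0 + Real.exp τ) +
            Real.sqrt (1 - 0 ^ 2 * Real.exp (-2 * τ)) * 1)) /
          (Real.sqrt (1 - 0 ^ 2 * Real.exp (-2 * τ)) * (0 + Real.exp τ)) ^ 2)) 0 :=
    (hf.sub_const _).const_mul _
  rw [hC.deriv]
  have hτα : τ - α ^ 2 * (Real.exp τ - 0) / (0 + Real.exp τ) = τ + (-α ^ 2) := by
    field_simp; ring
  rw [hτα, Real.exp_add]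
  have h2 : Real.exp (-2 * α ^ 2 - τ) =
      Real.exp (-α ^ 2) * Real.exp (-α ^ 2) * (Real.exp τ)⁻¹ := by
    rw [← Real.exp_add, ← Real.exp_neg, ← Real.exp_add]; ring_nf
  rw [h2]
  norm_num [Real.sqrt_one]
  field_simp
  ring
end
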